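/- Fix an integer δ ≥ 2. There exists N (depending on δ) such that for every n ≥ N with (δ+1) dividing n, there exists Q (depending on n and δ) such that for every q ≥ Q the number of proper q-colorings satisfies hom(K_{δ,n−δ}, K_q) < hom(G_1, K_q). -/

import Mathlib

set_option maxHeartbeats 1000000

/-- The number of `H`-colorings of a simple graph `G`, where the target graph (with loops
allowed) is given by a symmetric adjacency relation `H` on its vertex type. -/
noncomputable def homCount {α β : Type*} (G : SimpleGraph α) (H : β → β → Prop) : ℕ :=
  Nat.card {f : α → β // ∀ ⦃u v⦄, G.Adj u v → H (f u) (f v)}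

/-- The graph `G₁` on `m * (δ+1)` vertices: `m` disjoint copies of `K_{δ+1}` (the copy `a`
has vertex set `{a} × Fin (δ+1)`), together with the edges of a star on the specified
vertices `(a, 0)`, centered at the specified vertex `(0, 0)` of the first copy. -/
def G1 (m δ : ℕ) : SimpleGraph (Fin m × Fin (δ + 1)) :=
  SimpleGraph.fromRel fun x y => x.1 = y.1 ∨ (x.2 = 0 ∧ y.2 = 0 ∧ (x.1 : ℕ) = 0)

lemma lemL (m δ q : ℕ) :
    (q+1) * q^m * (q.descFactorial δ)^(m+1) ≤
      homCount (G1 (m+1) δ) (fun a b : Fin (q+1) => a ≠ b) := by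
  classical
  set D := Fin (q+1) × (Fin m → Fin q) × (Fin (m+1) → (Fin δ ↪ Fin q)) with hD
  have hcard : Nat.card D = (q+1) * q^m * (q.descFactorial δ)^(m+1) := by
    simp [hD, Nat.card_eq_fintype_card, Fintype.card_embedding_eq, mul_assoc]
  rw [← hcard, homCount]
  -- construct the injection
  let S : Fin (q+1) → (Fin m → Fin q) → Fin (m+1) → Fin (q+1) :=
    fun c s a => Fin.cases c (fun a' => c.succAbove (s a')) a
  let F : D → (Fin (m+1) × Fin (δ+1) → Fin (q+1)) :=
    fun d p => Fin.cases (S d.1 d.2.1 p.1) (fun j => (S d.1 d.2.1 p.1).succAbove (d.2.2 p.1 j)) p.2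
  have hproper : ∀ d : D, ∀ ⦃u v⦄, (G1 (m+1) δ).Adj u v → F d u ≠ F d v := by
    rintro ⟨c, s, g⟩ ⟨a, i⟩ ⟨b, j⟩ hadj
    rw [G1, SimpleGraph.fromRel_adj] at hadj
    obtain ⟨hne, hr⟩ := hadj
    have key : ∀ (a b : Fin (m+1)) (i j : Fin (δ+1)), (a,i) ≠ (b,j) →
        (a = b ∨ (i = 0 ∧ j = 0 ∧ (a : ℕ) = 0)) →
        F (c,s,g) (a,i) ≠ F (c,s,g) (b,j) := by
      rintro a b i j hne (rfl | ⟨hi, hj, ha⟩)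
      · have hij : i ≠ j := fun h => hne (by rw [h])
        induction i using Fin.cases with
        | zero =>
          induction j using Fin.cases with
          | zero => exact absurd rfl hij
          | succ j' => simpa [F] using (Fin.ne_succAbove _ _)
        | succ i' =>
          induction j using Fin.cases with
          | zero => simpa [F] using (Fin.succAbove_ne _ _)
          | succ j' =>
            simp only [F, Fin.cases_succ]
            intro h
            have := (g a).injective (Fin.succAbove_right_injective h)
            exact hij (by rw [this])
      · subst hi; subst hj
        have ha0 : a = 0 := Fin.ext ha
        subst ha0
        have hb : b ≠ 0 := fun h => hne (by rw [h])
        obtain ⟨b', rfl⟩ := Fin.eq_succ_of_ne_zero hb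
        simpa [F, S] using (Fin.ne_succAbove _ _)
    rcases hr with h | h
    · exact key a b i j hne h
    · exact fun heq => key b a j i (fun h => hne (by rw [h])) h heq.symm
  let Φ : D → {f : Fin (m+1) × Fin (δ+1) → Fin (q+1) //
      ∀ ⦃u v⦄, (G1 (m+1) δ).Adj u v → f u ≠ f v} := fun d => ⟨F d, hproper d⟩
  have hΦ : Function.Injective Φ := by
    rintro ⟨c, s, g⟩ ⟨c', s', g'⟩ h
    have hF : F (c,s,g) = F (c',s',g') := congrArg Subtype.val h
    have hSa : ∀ a, S c s a = S c' s' a := fun a => by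
      have := congrFun hF (a, 0)
      simpa [F] using this
    have hc : c = c' := by simpa [S] using hSa 0
    subst hc
    have hs : s = s' := by
      funext a'
      have := hSa a'.succ
      simp only [S, Fin.cases_succ] at this
      exact Fin.succAbove_right_injective this
    subst hs
    have hg : g = g' := by
      funext a
      apply DFunLike.ext
      intro j
      have := congrFun hF (a, j.succ)
      simp only [F, Fin.cases_succ] at this
      exact Fin.succAbove_right_injective this
    subst hg
    rfl
  exact Nat.card_le_card_of_injective Φ hΦ

lemma lemU (δ b q : ℕ) :
    homCount (completeBipartiteGraph (Fin δ) (Fin b)) (fun a b : Fin q => a ≠ b) ≤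
      q.descFactorial δ * (q - δ)^b + (q^δ - q.descFactorial δ) * q^b := by
  classical
  set A := Σ _g : Fin δ ↪ Fin q, (Fin b → ((Finset.univ.image ⇑_g)ᶜ : Finset (Fin q))) with hA
  set B := ({g : Fin δ → Fin q // ¬ Function.Injective g} × (Fin b → Fin q)) with hB
  have hcardA : Nat.card A = q.descFactorial δ * (q - δ)^b := by
    rw [Nat.card_eq_fintype_card, Fintype.card_sigma]
    have : ∀ g : Fin δ ↪ Fin q,
        Fintype.card (Fin b → ((Finset.univ.image ⇑g)ᶜ : Finset (Fin q))) = (q - δ)^b := by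
      intro g
      rw [Fintype.card_fun, Fintype.card_coe, Finset.card_compl,
        Finset.card_image_of_injective _ g.injective]
      simp
    simp only [this, Finset.sum_const, Finset.card_univ, Fintype.card_embedding_eq,
      Fintype.card_fin, smul_eq_mul]
  have hcardB : Nat.card B = (q^δ - q.descFactorial δ) * q^b := by
    rw [Nat.card_eq_fintype_card, Fintype.card_prod, Fintype.card_fun]
    congr 1
    · rw [Fintype.card_subtype_compl,
        Fintype.card_congr (Equiv.subtypeInjectiveEquivEmbedding (Fin δ) (Fin q)),
        Fintype.card_embedding_eq]
      simp
    · simp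
  have hcard : Nat.card (A ⊕ B) = q.descFactorial δ * (q - δ)^b + (q^δ - q.descFactorial δ) * q^b := by
    rw [Nat.card_sum, hcardA, hcardB]
  rw [← hcard, homCount]
  set G := completeBipartiteGraph (Fin δ) (Fin b)
  have hadj : ∀ (i : Fin δ) (v : Fin b), G.Adj (Sum.inl i) (Sum.inr v) := by
    intro i v; constructor <;> simp
  let Ψ : {f : Fin δ ⊕ Fin b → Fin q // ∀ ⦃u v⦄, G.Adj u v → f u ≠ f v} → A ⊕ B :=
    fun f =>
      if h : Function.Injective (fun i => f.1 (Sum.inl i)) then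
        Sum.inl ⟨⟨fun i => f.1 (Sum.inl i), h⟩, fun v =>
          ⟨f.1 (Sum.inr v), by
            simp only [Finset.mem_compl, Finset.mem_image, Finset.mem_univ, true_and,
              Function.Embedding.coeFn_mk]
            rintro ⟨i, hi⟩
            exact f.2 (hadj i v) hi⟩⟩
      else
        Sum.inr ⟨⟨fun i => f.1 (Sum.inl i), h⟩, fun v => f.1 (Sum.inr v)⟩
  let recover : A ⊕ B → (Fin δ ⊕ Fin b → Fin q) := fun x =>
    match x with
    | Sum.inl ⟨g, h⟩ => Sum.elim ⇑g (fun v => (h v).1)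
    | Sum.inr (g, h) => Sum.elim g.1 h
  have hrec : ∀ f, recover (Ψ f) = f.1 := by
    intro f
    by_cases h : Function.Injective (fun i => f.1 (Sum.inl i)) <;>
      simp only [Ψ, h, dif_pos, dif_neg, not_false_iff, recover] <;>
      funext x <;> cases x <;> rfl
  have hΨ : Function.Injective Ψ := by
    intro f f' h
    apply Subtype.ext
    rw [← hrec f, ← hrec f', h]
  exact Nat.card_le_card_of_injective Ψ hΨ

lemma bern_lower (a x : ℝ) (ha : 0 ≤ a) (hax : a ≤ x) :
    ∀ j : ℕ, x^j - j*a*x^(j-1) ≤ (x-a)^j := by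
  intro j
  induction j with
  | zero => simp
  | succ j ih =>
    cases j with
    | zero => simp
    | succ j =>
      have h1 : (x-a)^(j+2) = (x-a) * (x-a)^(j+1) := by ring
      have h2 : (x-a) * (x^(j+1) - (j+1)*a*x^j) ≤ (x-a) * (x-a)^(j+1) := by
        apply mul_le_mul_of_nonneg_left _ (by linarith)
        simpa using ih
      have h3 : x^(j+2) - (j+2)*a*x^(j+1) ≤ (x-a) * (x^(j+1) - (j+1)*a*x^j) := by
        have hx0 : 0 ≤ x := le_trans ha hax
        have : (x-a) * (x^(j+1) - (j+1)*a*x^j)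
            = x^(j+2) - (j+2)*a*x^(j+1) + (j+1)*(a*a)*x^j := by push_cast; ring
        nlinarith [mul_nonneg (mul_nonneg (by positivity : (0:ℝ) ≤ (j+1:ℝ)) (mul_nonneg ha ha)) (pow_nonneg hx0 j)]
      have h4 : (x-a) * (x^(j+1) - ((j:ℝ)+1)*a*x^j) ≤ (x-a)^(j+2) := h1 ▸ h2
      simp only [Nat.add_sub_cancel]
      push_cast
      linarith [h3, h4]

lemma bern_upper (a x : ℝ) (ha : 0 ≤ a) (hx : 0 ≤ x) :
    ∀ j : ℕ, x^j + j*a*x^(j-1) ≤ (x+a)^j := by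
  intro j
  induction j with
  | zero => simp
  | succ j ih =>
    cases j with
    | zero => simp
    | succ j =>
      have h2 : (x+a) * (x^(j+1) + (j+1)*a*x^j) ≤ (x+a) * (x+a)^(j+1) := by
        apply mul_le_mul_of_nonneg_left _ (by linarith)
        simpa using ih
      have h3 : x^(j+2) + (j+2)*a*x^(j+1) ≤ (x+a) * (x^(j+1) + (j+1)*a*x^j) := by
        have : (x+a) * (x^(j+1) + (j+1)*a*x^j)
            = x^(j+2) + (j+2)*a*x^(j+1) + (j+1)*(a*a)*x^j := by push_cast; ring
        nlinarith [mul_nonneg (mul_nonneg (by positivity : (0:ℝ) ≤ (j+1:ℝ)) (mul_nonneg ha ha)) (pow_nonneg hx j)]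
      have h4 : (x+a) * (x^(j+1) + ((j:ℝ)+1)*a*x^j) ≤ (x+a)^(j+2) := by
        calc (x+a) * (x^(j+1) + ((j:ℝ)+1)*a*x^j) ≤ (x+a) * (x+a)^(j+1) := h2
          _ = (x+a)^(j+2) := by ring
      simp only [Nat.add_sub_cancel]
      push_cast
      linarith [h3, h4]

lemma prod_bern (x a₁ a₂ : ℝ) (c d : ℕ) (ha₁ : 0 ≤ a₁) (ha₂ : 0 ≤ a₂)
    (h₁ : ((c:ℝ)+1)*a₁ ≤ x) (h₂ : ((d:ℝ)+1)*a₂ ≤ x) :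
    x^(c+d+2) - (((c:ℝ)+1)*a₁ + ((d:ℝ)+1)*a₂)*x^(c+d+1) ≤ (x-a₁)^(c+1) * (x-a₂)^(d+1) := by
  have hc1 : (1:ℝ) ≤ (c:ℝ)+1 := by have : (0:ℝ) ≤ (c:ℝ) := Nat.cast_nonneg c; linarith
  have hd1 : (1:ℝ) ≤ (d:ℝ)+1 := by have : (0:ℝ) ≤ (d:ℝ) := Nat.cast_nonneg d; linarith
  have hax₁ : a₁ ≤ x := le_trans (le_mul_of_one_le_left ha₁ hc1) h₁
  have hax₂ : a₂ ≤ x := le_trans (le_mul_of_one_le_left ha₂ hd1) h₂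
  have hx0 : 0 ≤ x := le_trans ha₁ hax₁
  have b₁ := bern_lower a₁ x ha₁ hax₁ (c+1)
  have b₂ := bern_lower a₂ x ha₂ hax₂ (d+1)
  simp only [Nat.add_sub_cancel] at b₁ b₂
  push_cast at b₁ b₂
  have n₂ : 0 ≤ x^(d+1) - ((d:ℝ)+1)*a₂*x^d := by
    have h : ((d:ℝ)+1)*a₂*x^d ≤ x*x^d :=
      mul_le_mul_of_nonneg_right h₂ (pow_nonneg hx0 d)
    have hxx : x*x^d = x^(d+1) := by ring
    linarith
  have mul1 : (x^(c+1) - ((c:ℝ)+1)*a₁*x^c) * (x^(d+1) - ((d:ℝ)+1)*a₂*x^d)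
      ≤ (x-a₁)^(c+1) * (x-a₂)^(d+1) :=
    mul_le_mul b₁ b₂ n₂ (pow_nonneg (by linarith) (c+1))
  have expand : (x^(c+1) - ((c:ℝ)+1)*a₁*x^c) * (x^(d+1) - ((d:ℝ)+1)*a₂*x^d)
      = x^(c+d+2) - (((c:ℝ)+1)*a₁ + ((d:ℝ)+1)*a₂)*x^(c+d+1)
        + (((c:ℝ)+1)*a₁*(((d:ℝ)+1)*a₂))*x^(c+d) := by ring
  nlinarith [mul_nonneg (mul_nonneg (mul_nonneg (by positivity : (0:ℝ) ≤ (c:ℝ)+1) ha₁)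
    (mul_nonneg (by positivity : (0:ℝ) ≤ (d:ℝ)+1) ha₂)) (pow_nonneg hx0 (c+d))]

lemma keyR (x : ℝ) (p k d b E : ℕ)
    (hkd : k + d + 1 = p + b)
    (hE : (E:ℝ) = ((k:ℝ)+1) + ((p:ℝ)+1)*((d:ℝ)+1))
    (hGap : E + (p+1)*(p+1) + 1 ≤ (b+1)*(p+1))
    (hq1 : (((E + (p+1)*(p+1))*((b+1)*(p+1)) : ℕ) : ℝ) < x)
    (hxk : ((k:ℝ)+1) ≤ x) (hxd : ((d:ℝ)+1)*((p:ℝ)+1) ≤ x) (hxδ : ((p:ℝ)+1) ≤ x) :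
    x^(p+1) * (x - ((p:ℝ)+1))^(b+1) + ((p:ℝ)+1)*((p:ℝ)+1)*x^p * x^(b+1)
      < x * (x-1)^(k+1) * (x-((p:ℝ)+1))^(d+1) := by
  set δr : ℝ := (p:ℝ)+1 with hδr
  set Br : ℝ := (b:ℝ)+1 with hBr
  have hx0 : 0 < x := lt_of_le_of_lt (by positivity) hq1
  have hδ0 : 0 ≤ δr := by positivity
  have hxδ' : 0 ≤ x - δr := by linarith
  -- Step A
  have u := bern_upper δr x hδ0 hx0.le (b+1)
  simp only [Nat.add_sub_cancel] at u
  push_cast at u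
  have T : (x + Br*δr) * x^b * (x-δr)^(b+1) ≤ x^(2*b+2) := by
    have t1 : (x-δr)^(b+1)*(x^(b+1) + ((b:ℝ)+1)*δr*x^b) ≤ (x-δr)^(b+1)*(x+δr)^(b+1) :=
      mul_le_mul_of_nonneg_left u (pow_nonneg hxδ' _)
    have t2 : (x-δr)^(b+1)*(x+δr)^(b+1) = ((x-δr)*(x+δr))^(b+1) := (mul_pow _ _ _).symm
    have t3 : (x-δr)*(x+δr) ≤ x^2 := by nlinarith [sq_nonneg δr]
    have t4 : ((x-δr)*(x+δr))^(b+1) ≤ (x^2)^(b+1) :=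
      pow_le_pow_left₀ (mul_nonneg hxδ' (by linarith)) t3 _
    have t5 : (x^2)^(b+1) = x^(2*b+2) := by rw [← pow_mul]; ring_nf
    calc (x + Br*δr) * x^b * (x-δr)^(b+1)
        = (x-δr)^(b+1)*(x^(b+1) + ((b:ℝ)+1)*δr*x^b) := by rw [hBr]; ring
      _ ≤ ((x-δr)*(x+δr))^(b+1) := by rw [← t2]; exact t1
      _ ≤ x^(2*b+2) := by rw [← t5]; exact t4
  -- Step B
  have P := prod_bern x 1 δr k d (by norm_num) hδ0 (by simpa using hxk) hxd
  rw [show k+d+2 = (p+b)+1 by omega, show k+d+1 = p+b by omega] at P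
  have hEP : ((k:ℝ)+1)*1 + ((d:ℝ)+1)*δr = (E:ℝ) := by rw [hE, hδr]; ring
  rw [hEP] at P
  -- Step C
  have gE : (E:ℝ) + δr*δr + 1 ≤ Br*δr := by
    have := hGap
    have h := (Nat.cast_le (α := ℝ)).mpr hGap
    push_cast at h
    rw [hδr, hBr]; linarith
  have hq1c : ((E:ℝ) + δr*δr)*(Br*δr) < x := by
    push_cast at hq1
    rw [hδr, hBr]; linarith
  have C : x^2 + δr*δr*(x + Br*δr) < (x + Br*δr)*(x - (E:ℝ)) := by
    have h5 : 1*x ≤ (Br*δr - (E:ℝ) - δr*δr)*x :=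
      mul_le_mul_of_nonneg_right (by linarith) hx0.le
    nlinarith [h5, hq1c]
  -- Assemble
  have hfac : 0 < (x + Br*δr)*x^b := by
    have : 0 < x + Br*δr := by nlinarith [mul_nonneg (by positivity : (0:ℝ) ≤ Br) hδ0]
    exact mul_pos this (pow_pos hx0 b)
  have key : ((x + Br*δr)*x^b) * (x^(p+1) * (x - δr)^(b+1) + δr*δr*x^p * x^(b+1))
      < ((x + Br*δr)*x^b) * (x * (x-1)^(k+1) * (x-δr)^(d+1)) := by
    calc ((x + Br*δr)*x^b) * (x^(p+1) * (x - δr)^(b+1) + δr*δr*x^p * x^(b+1))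
        = ((x + Br*δr) * x^b * (x-δr)^(b+1))*x^(p+1)
            + (δr*δr*(x + Br*δr))*x^(p+2*b+1) := by ring
      _ ≤ x^(2*b+2)*x^(p+1) + (δr*δr*(x + Br*δr))*x^(p+2*b+1) :=
          add_le_add_left (mul_le_mul_of_nonneg_right T (pow_nonneg hx0.le _)) _
      _ = x^(p+2*b+1)*(x^2 + δr*δr*(x + Br*δr)) := by ring
      _ < x^(p+2*b+1)*((x + Br*δr)*(x - (E:ℝ))) :=
          mul_lt_mul_of_pos_left C (pow_pos hx0 _)
      _ = ((x + Br*δr)*x^(b+1))*(x^((p+b)+1) - (E:ℝ)*x^(p+b)) := by ring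
      _ ≤ ((x + Br*δr)*x^(b+1))*((x-1)^(k+1)*(x-δr)^(d+1)) := by
          apply mul_le_mul_of_nonneg_left P
          have : 0 < x + Br*δr := by nlinarith [mul_nonneg (by positivity : (0:ℝ) ≤ Br) hδ0]
          positivity
      _ = ((x + Br*δr)*x^b) * (x * (x-1)^(k+1) * (x-δr)^(d+1)) := by ring
  exact lt_of_mul_lt_mul_left key hfac.le

lemma aux1 (q : ℕ) : ∀ k : ℕ, q ^ k ≤ q.descFactorial k + k * k * q ^ (k - 1) := by
  intro k
  induction k with
  | zero => simp
  | succ k ih =>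
    cases k with
    | zero => simp
    | succ k =>
      simp only [Nat.add_sub_cancel] at ih ⊢
      have h2 : q * q^(k+1) ≤ q * q.descFactorial (k+1) + (k+1)*(k+1)*(q*q^k) := by
        calc q * q^(k+1) ≤ q * (q.descFactorial (k+1) + (k+1)*(k+1)*q^k) :=
              mul_le_mul_right ih q
          _ = q * q.descFactorial (k+1) + (k+1)*(k+1)*(q*q^k) := by ring
      have hqq : q * q^(k+1) = q^(k+2) := by ring
      have hqq2 : q * q^k = q^(k+1) := by ring
      have h3 : q * q.descFactorial (k+1) ≤ q.descFactorial (k+2) + (k+1)*q^(k+1) := by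
        have hds : q.descFactorial (k+2) = (q-(k+1)) * q.descFactorial (k+1) :=
          Nat.descFactorial_succ q (k+1)
        have hle : q ≤ (q-(k+1)) + (k+1) := by omega
        calc q * q.descFactorial (k+1) ≤ ((q-(k+1)) + (k+1)) * q.descFactorial (k+1) :=
              mul_le_mul_left hle _
          _ = (q-(k+1))*q.descFactorial (k+1) + (k+1)*q.descFactorial (k+1) := by ring
          _ ≤ q.descFactorial (k+2) + (k+1)*q^(k+1) := by
              rw [hds]
              exact Nat.add_le_add_left (mul_le_mul_right (Nat.descFactorial_le_pow q (k+1)) _) _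
      have h4 : (k+1)*q^(k+1) + (k+1)*(k+1)*q^(k+1) ≤ (k+2)*(k+2)*q^(k+1) := by
        have : (k+1) + (k+1)*(k+1) ≤ (k+2)*(k+2) := by nlinarith
        calc (k+1)*q^(k+1) + (k+1)*(k+1)*q^(k+1) = ((k+1) + (k+1)*(k+1))*q^(k+1) := by ring
          _ ≤ (k+2)*(k+2)*q^(k+1) := mul_le_mul_left this _
      rw [hqq, hqq2] at h2
      linarith [h2, h3, h4]

lemma aux2 (q δ : ℕ) : ∀ k : ℕ, k ≤ δ → (q - δ)^k ≤ (q-1).descFactorial k := by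
  intro k
  induction k with
  | zero => simp
  | succ k ih =>
    intro h
    rw [Nat.descFactorial_succ, pow_succ']
    exact Nat.mul_le_mul (by omega) (ih (by omega))

theorem completeBipartite_lt_G1_colorings (δ : ℕ) (hδ : 2 ≤ δ) :
    ∃ N : ℕ, ∀ n : ℕ, N ≤ n → (δ + 1) ∣ n →
      ∃ Q : ℕ, ∀ q : ℕ, Q ≤ q →
        homCount (completeBipartiteGraph (Fin δ) (Fin (n - δ))) (fun a b : Fin q => a ≠ b) <
          homCount (G1 (n / (δ + 1)) δ) (fun a b : Fin q => a ≠ b) := by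
  obtain ⟨p, rfl⟩ : ∃ p, δ = p + 1 := ⟨δ - 1, by omega⟩
  have hp : 1 ≤ p := by omega
  refine ⟨(p+2)*(5*(p+1)*(p+1)), fun n hn hdvd => ?_⟩
  obtain ⟨m, hm⟩ := hdvd
  have hmdiv : n / (p+1+1) = m := by rw [hm]; exact Nat.mul_div_cancel_left _ (by omega)
  have hm5 : 5*(p+1)*(p+1) ≤ m := by
    have h := hn
    rw [hm] at h
    exact Nat.le_of_mul_le_mul_left h (by omega)
  have hm2 : 2 ≤ m := le_trans (by nlinarith) hm5
  obtain ⟨k, hk⟩ : ∃ k, m = k + 2 := ⟨m - 2, by omega⟩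
  subst hk
  have hp1k : p + 1 ≤ k + 2 := le_trans (by nlinarith) hm5
  have hnlin : n = (p+1)*(k+2) + (k+2) := by rw [hm]; ring
  have hple : p + 1 ≤ (p+1)*(k+2) := Nat.le_mul_of_pos_right _ (by omega)
  have hnp : p + 2 ≤ n := by linarith
  obtain ⟨b', hb'⟩ : ∃ b', n - (p+1) = b' + 1 := ⟨n - (p+1) - 1, by omega⟩
  have hb2 : b' + 1 + (p+1) = n := by omega
  obtain ⟨c, hc⟩ : ∃ c, k + 2 = c + (p+1) := ⟨k + 2 - (p+1), by omega⟩
  obtain ⟨d, hd⟩ : ∃ d, (p+1)*(k+2) = d + 1 := by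
    refine ⟨(p+1)*(k+2) - 1, ?_⟩
    have h1 : 1 ≤ (p+1)*(k+2) := Nat.one_le_iff_ne_zero.mpr (Nat.mul_ne_zero (by omega) (by omega))
    omega
  have hbc : b' + 1 = (p+1)*(k+2) + c := by linarith
  set E := (k+1) + (p+1)*(p+1)*(k+2) with hE
  refine ⟨(E + (p+1)*(p+1))*((b'+1)*(p+1)) + (p+1)*(p+1)*(k+2) + (k+2) + (p+1) + 2,
    fun q hq => ?_⟩
  have hz1 : 0 ≤ (E + (p+1)*(p+1))*((b'+1)*(p+1)) := Nat.zero_le _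
  have hz2 : 0 ≤ (p+1)*(p+1)*(k+2) := Nat.zero_le _
  have F1 : p + 1 ≤ q := by linarith
  have F2 : 1 ≤ q := by linarith
  have F3 : (p+1)*(p+1)*(k+2) ≤ q := by linarith
  have F4 : k + 2 ≤ q := by linarith
  have F4' : k + 1 ≤ q := by linarith
  have F5 : (E + (p+1)*(p+1))*((b'+1)*(p+1)) < q := by linarith
  have hcp : c*(p+1) + (p+1)*(p+1) = (k+2)*(p+1) := by rw [hc]; ring
  have hA : (k+2)*2 ≤ (k+2)*(p+1) := mul_le_mul_right (by omega) _
  have hGap : E + (p+1)*(p+1) + 1 ≤ (b'+1)*(p+1) := by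
    have hbp : (b'+1)*(p+1) = (p+1)*(p+1)*(k+2) + c*(p+1) := by rw [hbc]; ring
    rw [hE, hbp]
    linarith [hcp, hA, hm5]
  have hkd : k + d + 1 = p + b' := by linarith [hd, hbc, hc]
  have hEr : (E:ℝ) = ((k:ℝ)+1) + ((p:ℝ)+1)*((d:ℝ)+1) := by
    have hdr : ((p:ℝ)+1)*((k:ℝ)+2) = (d:ℝ)+1 := by exact_mod_cast congrArg (Nat.cast (R := ℝ)) hd
    rw [hE]; push_cast; rw [← hdr]; ring
  have F3' : (d+1)*(p+1) ≤ q := by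
    have hdd : (d+1)*(p+1) = (p+1)*(p+1)*(k+2) := by rw [← hd]; ring
    rw [hdd]; exact F3
  have MID : q^(p+1)*(q-(p+1))^(b'+1) + (p+1)*(p+1)*q^p*q^(b'+1)
      < q*(q-1)^(k+1)*(q-(p+1))^(d+1) := by
    have c1 : ((q - (p+1) : ℕ) : ℝ) = (q:ℝ) - ((p:ℝ)+1) := by
      rw [Nat.cast_sub F1]; push_cast; ring
    have c2 : ((q - 1 : ℕ) : ℝ) = (q:ℝ) - 1 := by
      rw [Nat.cast_sub F2]; push_cast; ring
    rw [← Nat.cast_lt (α := ℝ)]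
    push_cast [c1, c2]
    exact keyR (q:ℝ) p k d b' E hkd hEr hGap (by exact_mod_cast F5) (by exact_mod_cast F4')
      (by exact_mod_cast F3') (by exact_mod_cast F1)
  obtain ⟨q₀, rfl⟩ : ∃ t, q = t + 1 := ⟨q - 1, (Nat.succ_pred_eq_of_pos F2).symm⟩
  rw [hmdiv, hb']
  have step1 := lemU (p+1) (b'+1) (q₀+1)
  have descle := Nat.descFactorial_le_pow (q₀+1) (p+1)
  have sub1 : (q₀+1)^(p+1) - (q₀+1).descFactorial (p+1) ≤ (p+1)*(p+1)*(q₀+1)^p := by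
    have h := aux1 (q₀+1) (p+1)
    simp only [Nat.add_sub_cancel] at h
    exact Nat.sub_le_iff_le_add.mpr (by linarith)
  have step2 : (q₀+1).descFactorial (p+1) * ((q₀+1)-(p+1))^(b'+1)
        + ((q₀+1)^(p+1) - (q₀+1).descFactorial (p+1)) * (q₀+1)^(b'+1)
      ≤ (q₀+1)^(p+1)*((q₀+1)-(p+1))^(b'+1) + (p+1)*(p+1)*(q₀+1)^p*(q₀+1)^(b'+1) :=
    Nat.add_le_add (mul_le_mul_left descle _) (mul_le_mul_left sub1 _)
  have step3 : (q₀+1)*((q₀+1)-1)^(k+1)*((q₀+1)-(p+1))^(d+1)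
      ≤ (q₀+1)*q₀^(k+1)*(q₀.descFactorial (p+1))^(k+2) := by
    simp only [Nat.add_sub_cancel]
    rw [← hd, pow_mul]
    exact mul_le_mul_right
      (Nat.pow_le_pow_left (by simpa using aux2 (q₀+1) (p+1) (p+1) le_rfl) _) _
  have step4 := lemL (k+1) (p+1) q₀
  calc homCount (completeBipartiteGraph (Fin (p+1)) (Fin (b'+1)))
        (fun a b : Fin (q₀+1) => a ≠ b)
      ≤ (q₀+1).descFactorial (p+1) * ((q₀+1)-(p+1))^(b'+1)
        + ((q₀+1)^(p+1) - (q₀+1).descFactorial (p+1)) * (q₀+1)^(b'+1) := step1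
    _ ≤ (q₀+1)^(p+1)*((q₀+1)-(p+1))^(b'+1) + (p+1)*(p+1)*(q₀+1)^p*(q₀+1)^(b'+1) := step2
    _ < (q₀+1)*((q₀+1)-1)^(k+1)*((q₀+1)-(p+1))^(d+1) := by
        simpa using MID
    _ ≤ (q₀+1)*q₀^(k+1)*(q₀.descFactorial (p+1))^(k+2) := step3
    _ ≤ homCount (G1 (k+2) (p+1)) (fun a b : Fin (q₀+1) => a ≠ b) := step4
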